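/- The extended-valued function α(v,s,t) defined on ℝ × [0,∞)² by α(v,s,t) = v²/θ(s,t) when θ(s,t) > 0, α(v,s,t) = 0 when θ(s,t) = 0 and v = 0, and α(v,s,t) = +∞ when θ(s,t) = 0 and v ≠ 0, is convex on ℝ × [0,∞)². -/

import Mathlib

open scoped ENNReal

/-- The logarithmic mean, extended by 0 on the boundary of [0,∞)². -/
noncomputable def logMean0 (u v : ℝ) : ℝ :=
  if u ≤ 0 ∨ v ≤ 0 then 0
  else if u = v then v else (u - v) / (Real.log u - Real.log v)

lemma logMean0_pos {u v : ℝ} (hu : 0 < u) (hv : 0 < v) : 0 < logMean0 u v := by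
  rw [logMean0, if_neg (by push_neg; exact ⟨hu, hv⟩)]
  rcases eq_or_ne u v with h | h
  · rw [if_pos h]; exact hv
  · rw [if_neg h]
    rcases lt_or_gt_of_ne h with hlt | hgt
    · have : Real.log u < Real.log v := Real.log_lt_log hu hlt
      exact div_pos_of_neg_of_neg (by linarith) (by linarith)
    · have : Real.log v < Real.log u := Real.log_lt_log hv hgt
      exact div_pos (by linarith) (by linarith)

lemma logMean0_inv_eq {u v : ℝ} (hu : 0 < u) (hv : 0 < v) :
    (logMean0 u v)⁻¹ = ∫ r in (0:ℝ)..1, (r * u + (1 - r) * v)⁻¹ := by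
  rcases eq_or_ne u v with h | h
  · subst h
    rw [logMean0, if_neg (by push_neg; exact ⟨hu, hu⟩), if_pos rfl]
    simp only [show ∀ r : ℝ, r * u + (1 - r) * u = u from fun r => by ring]
    simp
  · rw [logMean0, if_neg (by push_neg; exact ⟨hu, hv⟩), if_neg h]
    have hc : u - v ≠ 0 := sub_ne_zero.mpr h
    have hint : ∀ r : ℝ, r * u + (1 - r) * v = (u - v) * r + v := fun r => by ring
    simp only [hint]
    rw [intervalIntegral.integral_comp_mul_add (fun x => x⁻¹) hc v,
      show (u - v) * 0 + v = v by ring, show (u - v) * 1 + v = u by ring]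
    rw [integral_inv (by
      intro h0
      rcases Set.mem_uIcc.mp h0 with ⟨h1, h2⟩ | ⟨h1, h2⟩ <;> linarith)]
    rw [Real.log_div (ne_of_gt hu) (ne_of_gt hv), smul_eq_mul, inv_div]
    rw [div_eq_inv_mul]

lemma logMean0_of_pos {u v : ℝ} (hu : 0 < u) (hv : 0 < v) :
    logMean0 u v = if u = v then v else (u - v) / (Real.log u - Real.log v) := by
  rw [logMean0, if_neg (by push_neg; exact ⟨hu, hv⟩)]

lemma lin_pos {x y r : ℝ} (hx : 0 < x) (hy : 0 < y) (h0 : 0 ≤ r) (h1 : r ≤ 1) :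
    0 < r * x + (1 - r) * y := by
  rcases lt_or_ge r 1 with h | h
  · have h2 : 0 < (1 - r) * y := mul_pos (by linarith) hy
    nlinarith [mul_nonneg h0 hx.le]
  · have : r = 1 := le_antisymm h1 h
    subst this
    nlinarith

lemma logMean0_smul {u v c : ℝ} (hu : 0 < u) (hv : 0 < v) (hc : 0 < c) :
    logMean0 (c * u) (c * v) = c * logMean0 u v := by
  have hcu : 0 < c * u := by positivity
  have hcv : 0 < c * v := by positivity
  rw [logMean0_of_pos hcu hcv, logMean0_of_pos hu hv]
  rcases eq_or_ne u v with h | h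
  · rw [if_pos (by rw [h]), if_pos h]
  · rw [if_neg (fun hh => h (mul_left_cancel₀ (ne_of_gt hc) hh)), if_neg h,
      Real.log_mul (ne_of_gt hc) (ne_of_gt hu), Real.log_mul (ne_of_gt hc) (ne_of_gt hv)]
    rw [show Real.log c + Real.log u - (Real.log c + Real.log v) = Real.log u - Real.log v by ring]
    rw [show c * u - c * v = c * (u - v) by ring, mul_div_assoc]

lemma logMean0_mono {u v u' v' : ℝ} (hu : 0 < u) (hv : 0 < v)
    (hu' : u ≤ u') (hv' : v ≤ v') : logMean0 u v ≤ logMean0 u' v' := by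
  have hu'0 : 0 < u' := lt_of_lt_of_le hu hu'
  have hv'0 : 0 < v' := lt_of_lt_of_le hv hv'
  have h1 := logMean0_pos hu hv
  have h2 := logMean0_pos hu'0 hv'0
  rw [← inv_le_inv₀ h2 h1]
  rw [logMean0_inv_eq hu hv, logMean0_inv_eq hu'0 hv'0]
  have key : ∀ (x y : ℝ), 0 < x → 0 < y →
      ContinuousOn (fun r : ℝ => (r * x + (1 - r) * y)⁻¹) (Set.uIcc 0 1) := by
    intro x y hx hy
    apply ContinuousOn.inv₀
    · fun_prop
    · intro r hr
      rw [Set.uIcc_of_le (by norm_num)] at hr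
      have h1 := hr.1; have h2 := hr.2
      exact ne_of_gt (lin_pos hx hy h1 h2)
  apply intervalIntegral.integral_mono_on (by norm_num)
    ((key u' v' hu'0 hv'0).intervalIntegrable) ((key u v hu hv).intervalIntegrable)
  intro r hr
  have hr1 := hr.1; have hr2 := hr.2
  apply inv_anti₀ (lin_pos hu hv hr1 hr2)
  have := mul_le_mul_of_nonneg_left hu' hr1
  have := mul_le_mul_of_nonneg_left hv' (by linarith : (0:ℝ) ≤ 1 - r)
  linarith

lemma lin_pos' {x y a b : ℝ} (hx : 0 < x) (hy : 0 < y) (ha : 0 ≤ a) (hb : 0 ≤ b)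
    (hab : a + b = 1) : 0 < a * x + b * y := by
  have hb1 : b = 1 - a := by linarith
  subst hb1
  exact lin_pos hx hy ha (by linarith)

lemma perspective_pointwise {w₁ w₂ x₁ x₂ a b : ℝ} (hx₁ : 0 < x₁) (hx₂ : 0 < x₂)
    (ha : 0 ≤ a) (hb : 0 ≤ b) (hab : a + b = 1) :
    (a * w₁ + b * w₂) ^ 2 * (a * x₁ + b * x₂)⁻¹
      ≤ a * (w₁ ^ 2 * x₁⁻¹) + b * (w₂ ^ 2 * x₂⁻¹) := by
  have hx : 0 < a * x₁ + b * x₂ := lin_pos' hx₁ hx₂ ha hb hab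
  rw [← div_eq_mul_inv, ← div_eq_mul_inv, ← div_eq_mul_inv, ← mul_div_assoc, ← mul_div_assoc,
    div_add_div _ _ (ne_of_gt hx₁) (ne_of_gt hx₂), div_le_div_iff₀ hx (by positivity)]
  nlinarith [mul_nonneg (mul_nonneg ha hb) (sq_nonneg (w₁ * x₂ - w₂ * x₁))]

lemma key_convex {v₁ s₁ t₁ v₂ s₂ t₂ a b : ℝ} (hs₁ : 0 < s₁) (ht₁ : 0 < t₁)
    (hs₂ : 0 < s₂) (ht₂ : 0 < t₂) (ha : 0 ≤ a) (hb : 0 ≤ b) (hab : a + b = 1) :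
    (a * v₁ + b * v₂) ^ 2 / logMean0 (a * s₁ + b * s₂) (a * t₁ + b * t₂)
      ≤ a * (v₁ ^ 2 / logMean0 s₁ t₁) + b * (v₂ ^ 2 / logMean0 s₂ t₂) := by
  have hS : 0 < a * s₁ + b * s₂ := lin_pos' hs₁ hs₂ ha hb hab
  have hT : 0 < a * t₁ + b * t₂ := lin_pos' ht₁ ht₂ ha hb hab
  have cont : ∀ (c x y : ℝ), 0 < x → 0 < y →
      ContinuousOn (fun r : ℝ => c * (r * x + (1 - r) * y)⁻¹) (Set.uIcc 0 1) := by
    intro c x y hx hy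
    apply ContinuousOn.mul continuousOn_const
    apply ContinuousOn.inv₀ (by fun_prop)
    intro r hr
    rw [Set.uIcc_of_le (by norm_num)] at hr
    exact ne_of_gt (lin_pos hx hy hr.1 hr.2)
  simp only [div_eq_mul_inv, logMean0_inv_eq hS hT, logMean0_inv_eq hs₁ ht₁,
    logMean0_inv_eq hs₂ ht₂, ← mul_assoc, ← intervalIntegral.integral_const_mul]
  rw [← intervalIntegral.integral_add ((cont _ _ _ hs₁ ht₁).intervalIntegrable)
    ((cont _ _ _ hs₂ ht₂).intervalIntegrable)]
  apply intervalIntegral.integral_mono_on (by norm_num)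
    ((cont _ _ _ hS hT).intervalIntegrable)
  · exact ((cont _ _ _ hs₁ ht₁).intervalIntegrable).add ((cont _ _ _ hs₂ ht₂).intervalIntegrable)
  · intro r hr
    have h1 := hr.1; have h2 := hr.2
    have e1 : r * (a * s₁ + b * s₂) + (1 - r) * (a * t₁ + b * t₂)
        = a * (r * s₁ + (1 - r) * t₁) + b * (r * s₂ + (1 - r) * t₂) := by ring
    rw [e1]
    have := perspective_pointwise (w₁ := v₁) (w₂ := v₂)
      (lin_pos hs₁ ht₁ h1 h2) (lin_pos hs₂ ht₂ h1 h2) ha hb hab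
    calc (a * v₁ + b * v₂) ^ 2 * (a * (r * s₁ + (1 - r) * t₁) + b * (r * s₂ + (1 - r) * t₂))⁻¹
        ≤ a * (v₁ ^ 2 * (r * s₁ + (1 - r) * t₁)⁻¹) + b * (v₂ ^ 2 * (r * s₂ + (1 - r) * t₂)⁻¹) :=
          this
      _ = a * v₁ ^ 2 * (r * s₁ + (1 - r) * t₁)⁻¹ + b * v₂ ^ 2 * (r * s₂ + (1 - r) * t₂)⁻¹ := by
          ring

lemma logMean0_eq_zero {u v : ℝ} (h : u ≤ 0 ∨ v ≤ 0) : logMean0 u v = 0 := by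
  rw [logMean0, if_pos h]

lemma pos_of_logMean0_ne_zero {u v : ℝ} (h : logMean0 u v ≠ 0) : 0 < u ∧ 0 < v := by
  constructor
  · by_contra h'; exact h (logMean0_eq_zero (Or.inl (le_of_not_gt h')))
  · by_contra h'; exact h (logMean0_eq_zero (Or.inr (le_of_not_gt h')))

lemma degenerate_bound {v x y S T c : ℝ} (hx : 0 < x) (hy : 0 < y) (hc : 0 < c)
    (hS : c * x ≤ S) (hT : c * y ≤ T) :
    (c * v) ^ 2 / logMean0 S T ≤ c * (v ^ 2 / logMean0 x y) := by
  have hcx : 0 < c * x := by positivity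
  have hcy : 0 < c * y := by positivity
  have hθ := logMean0_pos hx hy
  have hmono : c * logMean0 x y ≤ logMean0 S T := by
    rw [← logMean0_smul hx hy hc]
    exact logMean0_mono hcx hcy hS hT
  calc (c * v) ^ 2 / logMean0 S T
      ≤ (c * v) ^ 2 / (c * logMean0 x y) :=
        div_le_div_of_nonneg_left (by positivity) (by positivity) hmono
    _ = c * (v ^ 2 / logMean0 x y) := by
        field_simp

open scoped ENNReal

/-- The extended-valued action density α(v,s,t) = v²/θ(s,t), with the conventions
    0²/0 = 0 and v²/0 = +∞ for v ≠ 0. -/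
noncomputable def alphaE (v s t : ℝ) : ℝ≥0∞ :=
  if logMean0 s t = 0 then (if v = 0 then 0 else ⊤)
  else ENNReal.ofReal (v ^ 2 / logMean0 s t)

lemma alphaE_def (v s t : ℝ) : alphaE v s t =
    if logMean0 s t = 0 then (if v = 0 then 0 else ⊤)
    else ENNReal.ofReal (v ^ 2 / logMean0 s t) := rfl

/-- α is convex on ℝ × [0,∞)², in the sense of extended-real-valued functions. -/
theorem alphaE_convex (v₁ s₁ t₁ v₂ s₂ t₂ : ℝ)
    (hs₁ : 0 ≤ s₁) (ht₁ : 0 ≤ t₁) (hs₂ : 0 ≤ s₂) (ht₂ : 0 ≤ t₂)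
    (a b : ℝ) (ha : 0 ≤ a) (hb : 0 ≤ b) (hab : a + b = 1) :
    alphaE (a * v₁ + b * v₂) (a * s₁ + b * s₂) (a * t₁ + b * t₂)
      ≤ ENNReal.ofReal a * alphaE v₁ s₁ t₁ + ENNReal.ofReal b * alphaE v₂ s₂ t₂ := by
  by_cases hΘ : logMean0 (a * s₁ + b * s₂) (a * t₁ + b * t₂) = 0
  · rw [alphaE_def, if_pos hΘ]
    by_cases hV : a * v₁ + b * v₂ = 0
    · rw [if_pos hV]; exact zero_le
    · rw [if_neg hV]
      have hST : a * s₁ + b * s₂ ≤ 0 ∨ a * t₁ + b * t₂ ≤ 0 := by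
        by_contra h
        push_neg at h
        exact (ne_of_gt (logMean0_pos h.1 h.2)) hΘ
      have hv : a * v₁ ≠ 0 ∨ b * v₂ ≠ 0 := by
        by_contra h
        push_neg at h
        exact hV (by rw [h.1, h.2]; ring)
      rcases hv with h | h
      · -- a > 0, v₁ ≠ 0, and θ₁ = 0
        have hap : 0 < a := ha.lt_of_ne (fun h' => h (by rw [← h', zero_mul]))
        have hv1 : v₁ ≠ 0 := fun h' => h (by rw [h', mul_zero])
        have h1 : logMean0 s₁ t₁ = 0 := by
          rcases hST with hS | hT
          · have : a * s₁ = 0 := le_antisymm (by nlinarith [mul_nonneg hb hs₂]) (by positivity)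
            have : s₁ = 0 := by
              rcases mul_eq_zero.mp this with h' | h'
              · exact absurd h' (ne_of_gt hap)
              · exact h'
            exact logMean0_eq_zero (Or.inl this.le)
          · have : a * t₁ = 0 := le_antisymm (by nlinarith [mul_nonneg hb ht₂]) (by positivity)
            have : t₁ = 0 := by
              rcases mul_eq_zero.mp this with h' | h'
              · exact absurd h' (ne_of_gt hap)
              · exact h'
            exact logMean0_eq_zero (Or.inr this.le)
        rw [alphaE_def, if_pos h1, if_neg hv1, ENNReal.mul_top
          (ENNReal.ofReal_pos.mpr hap).ne', top_add]
      · -- b > 0, v₂ ≠ 0, and θ₂ = 0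
        have hbp : 0 < b := hb.lt_of_ne (fun h' => h (by rw [← h', zero_mul]))
        have hv2 : v₂ ≠ 0 := fun h' => h (by rw [h', mul_zero])
        have h2 : logMean0 s₂ t₂ = 0 := by
          rcases hST with hS | hT
          · have : b * s₂ = 0 := le_antisymm (by nlinarith [mul_nonneg ha hs₁]) (by positivity)
            have : s₂ = 0 := by
              rcases mul_eq_zero.mp this with h' | h'
              · exact absurd h' (ne_of_gt hbp)
              · exact h'
            exact logMean0_eq_zero (Or.inl this.le)
          · have : b * t₂ = 0 := le_antisymm (by nlinarith [mul_nonneg ha ht₁]) (by positivity)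
            have : t₂ = 0 := by
              rcases mul_eq_zero.mp this with h' | h'
              · exact absurd h' (ne_of_gt hbp)
              · exact h'
            exact logMean0_eq_zero (Or.inr this.le)
        rw [alphaE_def v₂ s₂ t₂, if_pos h2, if_neg hv2, ENNReal.mul_top
          (ENNReal.ofReal_pos.mpr hbp).ne', add_top]
  · -- interior for the combination
    have hSTpos := pos_of_logMean0_ne_zero hΘ
    obtain ⟨hS, hT⟩ := hSTpos
    have hΘp : 0 < logMean0 (a * s₁ + b * s₂) (a * t₁ + b * t₂) := logMean0_pos hS hT
    by_cases haz : a = 0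
    · subst haz
      have hb1 : b = 1 := by linarith
      subst hb1
      simp only [zero_mul, one_mul, zero_add, ENNReal.ofReal_zero, ENNReal.ofReal_one]
      exact le_refl _
    by_cases hbz : b = 0
    · subst hbz
      have ha1 : a = 1 := by linarith
      subst ha1
      simp only [zero_mul, one_mul, zero_add, add_zero, mul_zero,
        ENNReal.ofReal_zero, ENNReal.ofReal_one]
      exact le_refl _
    have hap : 0 < a := lt_of_le_of_ne ha (Ne.symm haz)
    have hbp : 0 < b := lt_of_le_of_ne hb (Ne.symm hbz)
    rw [alphaE_def, if_neg hΘ]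
    by_cases h1 : logMean0 s₁ t₁ = 0
    · by_cases hv1 : v₁ = 0
      · by_cases h2 : logMean0 s₂ t₂ = 0
        · by_cases hv2 : v₂ = 0
          · rw [show a * v₁ + b * v₂ = 0 by rw [hv1, hv2]; ring]
            simp
          · rw [alphaE_def v₂ s₂ t₂, if_pos h2, if_neg hv2, ENNReal.mul_top
              (ENNReal.ofReal_pos.mpr hbp).ne', add_top]
            exact le_top
        · obtain ⟨hs₂p, ht₂p⟩ := pos_of_logMean0_ne_zero h2
          rw [alphaE_def v₁ s₁ t₁, alphaE_def v₂ s₂ t₂, if_pos h1, if_pos hv1, if_neg h2,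
            mul_zero, zero_add,
            ← ENNReal.ofReal_mul hb]
          apply ENNReal.ofReal_le_ofReal
          rw [hv1, mul_zero, zero_add]
          have : b * v₂ = b * v₂ := rfl
          exact degenerate_bound hs₂p ht₂p hbp
            (by nlinarith [mul_nonneg ha hs₁]) (by nlinarith [mul_nonneg ha ht₁])
      · rw [alphaE_def v₁ s₁ t₁, if_pos h1, if_neg hv1, ENNReal.mul_top
          (ENNReal.ofReal_pos.mpr hap).ne', top_add]
        exact le_top
    · by_cases h2 : logMean0 s₂ t₂ = 0
      · by_cases hv2 : v₂ = 0
        · obtain ⟨hs₁p, ht₁p⟩ := pos_of_logMean0_ne_zero h1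
          rw [alphaE_def v₁ s₁ t₁, alphaE_def v₂ s₂ t₂, if_pos h2, if_pos hv2, if_neg h1,
            mul_zero, add_zero,
            ← ENNReal.ofReal_mul ha]
          apply ENNReal.ofReal_le_ofReal
          rw [hv2, mul_zero, add_zero]
          exact degenerate_bound hs₁p ht₁p hap
            (by nlinarith [mul_nonneg hb hs₂]) (by nlinarith [mul_nonneg hb ht₂])
        · rw [alphaE_def v₂ s₂ t₂, if_pos h2, if_neg hv2, ENNReal.mul_top
            (ENNReal.ofReal_pos.mpr hbp).ne', add_top]
          exact le_top
      · obtain ⟨hs₁p, ht₁p⟩ := pos_of_logMean0_ne_zero h1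
        obtain ⟨hs₂p, ht₂p⟩ := pos_of_logMean0_ne_zero h2
        have hθ₁ := logMean0_pos hs₁p ht₁p
        have hθ₂ := logMean0_pos hs₂p ht₂p
        rw [alphaE_def v₁ s₁ t₁, alphaE_def v₂ s₂ t₂, if_neg h1, if_neg h2,
          ← ENNReal.ofReal_mul ha, ← ENNReal.ofReal_mul hb,
          ← ENNReal.ofReal_add (mul_nonneg ha (div_nonneg (sq_nonneg _) hθ₁.le))
            (mul_nonneg hb (div_nonneg (sq_nonneg _) hθ₂.le))]
        exact ENNReal.ofReal_le_ofReal
          (key_convex hs₁p ht₁p hs₂p ht₂p ha hb hab)
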